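/- Let d ≥ 1 be an integer, let Z > 0, and let μ be a Borel measure on ℝ^d × [0,∞) × [0,∞) such that μ(ℝ^d × [0,∞) × [t₁, t₂]) ≤ (t₂ − t₁) Z for all 0 ≤ t₁ ≤ t₂. Then there exists a family (g_t)_{t ≥ 0} of Borel measures on ℝ^d × [0,∞) such that g_t(ℝ^d × [0,∞)) ≤ Z for every t ≥ 0, the map t ↦ ∫ J dg_t is Borel measurable for every bounded continuous J : ℝ^d × [0,∞) → ℝ, and for every bounded continuous compactly supported J : ℝ^d × [0,∞) × [0,∞) → ℝ one has ∫ J dμ = ∫_0^∞ ( ∫ J(x,n,t) g_t(dx,dn) ) dt. -/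

import Mathlib

open MeasureTheory ProbabilityTheory Set Real
open scoped ENNReal NNReal

section Aux

variable {X : Type*} [MeasurableSpace X] [StandardBorelSpace X] [Nonempty X]

set_option maxHeartbeats 1000000 in
theorem aux_main (Z : ℝ) (hZ : 0 < Z) (ν : Measure (ℝ × (X × ℝ)))
    (hν0 : ν ((Ici (0:ℝ) ×ˢ ((univ : Set X) ×ˢ Ici (0:ℝ)))ᶜ) = 0)
    (hbd : ∀ t₁ t₂ : ℝ, 0 ≤ t₁ → t₁ ≤ t₂ →
      ν.fst (Icc t₁ t₂) ≤ ENNReal.ofReal ((t₂ - t₁) * Z)) :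
    ∃ g : ℝ → Measure (X × ℝ),
      (∀ t : ℝ, g t univ ≤ ENNReal.ofReal Z ∧ g t (((univ : Set X) ×ˢ Ici (0:ℝ))ᶜ) = 0) ∧
      (∀ J : X × ℝ → ℝ, Measurable J → (∃ M, ∀ p, |J p| ≤ M) →
        Measurable fun t => ∫ p, J p ∂(g t)) ∧
      (∀ K : ℝ × (X × ℝ) → ℝ, Measurable K → (∃ M, ∀ p, |K p| ≤ M) →
        (∃ T : ℝ, 0 ≤ T ∧ ∀ q, q.1 ∉ Icc (-T) T → K q = 0) →
        (∫ q, K q ∂ν) = ∫ t in Ici (0:ℝ), (∫ p, K (t, p) ∂(g t))) := by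
  classical
  set S : Set (X × ℝ) := (univ : Set X) ×ˢ Ici (0:ℝ) with hSdef
  have hS : MeasurableSet S := MeasurableSet.univ.prod measurableSet_Ici
  -- basic null facts
  have hIio : ν.fst (Iio (0:ℝ)) = 0 := by
    rw [Measure.fst_apply measurableSet_Iio]
    refine measure_mono_null ?_ hν0
    intro q hq
    simp only [mem_preimage, mem_Iio] at hq
    simp only [mem_compl_iff, mem_prod, mem_Ici, not_and_or, not_le]
    exact Or.inl hq
  -- interval bound
  have hIoc : ∀ a b : ℝ, a ≤ b → ν.fst (Ioc a b) ≤ ENNReal.ofReal ((b - a) * Z) := by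
    intro a b hab
    rcases lt_or_ge b 0 with hb | hb
    · refine le_of_eq_of_le (measure_mono_null (fun x hx => ?_) hIio) zero_le
      exact lt_of_le_of_lt hx.2 hb
    · have hsub : Ioc a b ⊆ Iio 0 ∪ Icc (max a 0) b := by
        intro x hx
        rcases lt_or_ge x 0 with hx0 | hx0
        · exact Or.inl hx0
        · exact Or.inr ⟨max_le hx.1.le hx0, hx.2⟩
      refine le_trans (measure_mono hsub) (le_trans (measure_union_le _ _) ?_)
      rw [hIio, zero_add]
      refine le_trans (hbd _ _ (le_max_right a 0) (max_le hab hb)) ?_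
      exact ENNReal.ofReal_le_ofReal
        (mul_le_mul_of_nonneg_right (sub_le_sub_left (le_max_left a 0) b) hZ.le)
  have hIocNe : ∀ a b : ℝ, a ≤ b → ν.fst (Ioc a b) ≠ ⊤ :=
    fun a b hab => ne_top_of_le_ne_top ENNReal.ofReal_ne_top (hIoc a b hab)
  have hIic : ∀ t : ℝ, ν.fst (Iic t) ≠ ⊤ := by
    intro t
    have hsub : Iic t ⊆ Iio 0 ∪ Ioc (-1) (max t 0) := by
      intro x hx
      rcases lt_or_ge x 0 with hx0 | hx0
      · exact Or.inl hx0
      · exact Or.inr ⟨lt_of_lt_of_le (by norm_num) hx0, le_max_of_le_left hx⟩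
    refine ne_top_of_le_ne_top ?_ (le_trans (measure_mono hsub) (measure_union_le _ _))
    rw [hIio, zero_add]
    exact hIocNe _ _ (by nlinarith [le_max_right t 0])
  -- the cumulative function
  set F : ℝ → ℝ := fun t => (ν.fst (Iic t)).toReal with hF
  have hkey : ∀ a b : ℝ, a ≤ b → F b = F a + (ν.fst (Ioc a b)).toReal := by
    intro a b hab
    rw [hF]
    simp only
    rw [← ENNReal.toReal_add (hIic a) (hIocNe a b hab)]
    congr 1
    rw [← measure_union (Iic_disjoint_Ioc le_rfl) measurableSet_Ioc, Iic_union_Ioc_eq_Iic hab]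
  have hFdiff : ∀ a b : ℝ, a ≤ b → 0 ≤ F b - F a ∧ F b - F a ≤ (b - a) * Z := by
    intro a b hab
    rw [hkey a b hab]
    constructor
    · simp [ENNReal.toReal_nonneg]
    · have := ENNReal.toReal_le_of_le_ofReal (mul_nonneg (sub_nonneg.2 hab) hZ.le) (hIoc a b hab)
      linarith
  have hFcont : Continuous F := by
    have : LipschitzWith (Real.toNNReal Z) F := by
      refine LipschitzWith.of_dist_le_mul fun x y => ?_
      rcases le_total x y with h | h
      · rw [Real.dist_eq, Real.dist_eq, abs_sub_comm, abs_of_nonneg (hFdiff x y h).1,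
          abs_of_nonpos (by linarith)]
        have := (hFdiff x y h).2
        rw [Real.coe_toNNReal _ hZ.le]
        nlinarith
      · rw [Real.dist_eq, Real.dist_eq, abs_of_nonneg (hFdiff y x h).1,
          abs_of_nonneg (by linarith)]
        have := (hFdiff y x h).2
        rw [Real.coe_toNNReal _ hZ.le]
        nlinarith
    exact this.continuous
  set G : StieltjesFunction ℝ :=
    { toFun := fun t => Z * t - F t
      mono' := by
        intro a b hab
        have := (hFdiff a b hab).2
        simp only
        nlinarith
      right_continuous' := fun x =>
        ((continuous_const.mul continuous_id).sub hFcont).continuousWithinAt } with hG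
  have hsum : ν.fst + G.measure = (ENNReal.ofReal Z) • (volume : Measure ℝ) := by
    refine Measure.ext_of_Ioc' _ _ (fun a b hab => ?_) (fun a b hab => ?_)
    · rw [Measure.add_apply]
      exact ENNReal.add_ne_top.2 ⟨hIocNe a b hab.le,
        by rw [G.measure_Ioc]; exact ENNReal.ofReal_ne_top⟩
    · rw [Measure.add_apply, G.measure_Ioc, Measure.smul_apply, Real.volume_Ioc,
        smul_eq_mul, ← ENNReal.ofReal_mul hZ.le]
      have h1 : ν.fst (Ioc a b) = ENNReal.ofReal ((ν.fst (Ioc a b)).toReal) :=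
        (ENNReal.ofReal_toReal (hIocNe a b hab.le)).symm
      rw [h1, ← ENNReal.ofReal_add ENNReal.toReal_nonneg]
      · congr 1
        have := hkey a b hab.le
        simp only [hG]
        nlinarith [hkey a b hab.le]
      · have := (hFdiff a b hab.le).2
        have h2 := hkey a b hab.le
        simp only [hG]
        nlinarith
  have hle : ν.fst ≤ (ENNReal.ofReal Z) • (volume : Measure ℝ) := by
    rw [← hsum]; exact Measure.le_add_right le_rfl
  have hac : ν.fst ≪ (volume : Measure ℝ) :=
    (Measure.absolutelyContinuous_of_le hle).trans Measure.smul_absolutelyContinuous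
  -- exponential weights
  set eN : ℝ → ℝ≥0∞ := fun t => ENNReal.ofReal (Real.exp (-t)) with heNdef
  set eP : ℝ → ℝ≥0∞ := fun t => ENNReal.ofReal (Real.exp t) with hePdef
  have heN : Measurable eN := ENNReal.measurable_ofReal.comp (Real.continuous_exp.measurable.comp measurable_neg)
  have heP : Measurable eP := ENNReal.measurable_ofReal.comp Real.continuous_exp.measurable
  have heNP : ∀ t, eN t * eP t = 1 := by
    intro t
    rw [heNdef, hePdef]
    simp only
    rw [← ENNReal.ofReal_mul (Real.exp_pos _).le, ← Real.exp_add]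
    simp
  set ν' : Measure (ℝ × (X × ℝ)) := ν.withDensity (fun q => eN q.1) with hν'def
  have hν'univ : ν' univ ≠ ⊤ := by
    have h1 : ν' univ = ∫⁻ q, eN q.1 ∂ν := by
      rw [hν'def, withDensity_apply _ MeasurableSet.univ, Measure.restrict_univ]
    have h2 : ∫⁻ q, eN q.1 ∂ν = ∫⁻ t, eN t ∂ν.fst := by
      rw [Measure.fst, lintegral_map heN measurable_fst]
    have h3 : ∫⁻ t in (Ici (0:ℝ))ᶜ, eN t ∂ν.fst = 0 := by
      rw [compl_Ici]; exact setLIntegral_measure_zero _ _ hIio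
    have h4 : ∫⁻ t in Ici (0:ℝ), eN t ∂ν.fst
        ≤ ∫⁻ t in Ici (0:ℝ), eN t ∂((ENNReal.ofReal Z) • (volume : Measure ℝ)) :=
      lintegral_mono' (Measure.restrict_mono le_rfl hle) le_rfl
    have h5 : ∫⁻ t in Ici (0:ℝ), eN t ∂((ENNReal.ofReal Z) • (volume : Measure ℝ)) < ⊤ := by
      rw [Measure.restrict_smul, lintegral_smul_measure]
      have hInt : IntegrableOn (fun t => Real.exp (-t)) (Ici (0:ℝ)) := by
        rw [integrableOn_Ici_iff_integrableOn_Ioi]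
        simpa using exp_neg_integrableOn_Ioi 0 one_pos
      have := hInt.setLIntegral_lt_top
      exact ENNReal.mul_lt_top (ENNReal.ofReal_lt_top) this
    rw [h1, h2, ← lintegral_add_compl _ (measurableSet_Ici (a := (0:ℝ))), h3, add_zero]
    exact (lt_of_le_of_lt h4 h5).ne
  haveI hν'fin : IsFiniteMeasure ν' := ⟨lt_top_iff_ne_top.2 hν'univ⟩
  have hfst' : ν'.fst = ν.fst.withDensity eN := by
    ext s hs
    rw [Measure.fst_apply hs, hν'def, withDensity_apply _ (measurable_fst hs),
      withDensity_apply _ hs, Measure.fst, setLIntegral_map hs heN measurable_fst]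
  have hac' : ν'.fst ≪ (volume : Measure ℝ) := by
    rw [hfst']; exact (withDensity_absolutelyContinuous _ _).trans hac
  set ρ' : ℝ → ℝ≥0∞ := ν'.fst.rnDeriv volume with hρ'def
  have hρ'm : Measurable ρ' := Measure.measurable_rnDeriv _ _
  have hwd : (volume : Measure ℝ).withDensity ρ' = ν'.fst :=
    Measure.withDensity_rnDeriv_eq _ _ hac'
  have hνfst_wd : ν.fst = (volume : Measure ℝ).withDensity (fun t => ρ' t * eP t) := by
    have h1 : ν.fst.withDensity (fun t => eN t * eP t) = ν.fst := by
      have h : (fun t => eN t * eP t) = fun _ => (1:ℝ≥0∞) := funext heNP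
      rw [h]
      exact withDensity_one
    calc ν.fst = ν.fst.withDensity (fun t => eN t * eP t) := h1.symm
      _ = (ν.fst.withDensity eN).withDensity eP := by
            rw [show (fun t => eN t * eP t) = eN * eP from rfl]
            exact withDensity_mul _ heN heP
      _ = ((volume : Measure ℝ).withDensity ρ').withDensity eP := by rw [← hfst', hwd]
      _ = (volume : Measure ℝ).withDensity (fun t => ρ' t * eP t) := by
            rw [show (fun t => ρ' t * eP t) = ρ' * eP from rfl]
            exact (withDensity_mul _ hρ'm heP).symm
  have hbound : ∀ᵐ t ∂(volume : Measure ℝ), ρ' t * eP t ≤ ENNReal.ofReal Z := by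
    refine ae_le_of_forall_setLIntegral_le_of_sigmaFinite (hρ'm.mul heP) fun s hs hsf => ?_
    calc ∫⁻ t in s, ρ' t * eP t = ν.fst s := by
          rw [hνfst_wd, withDensity_apply _ hs]
      _ ≤ ((ENNReal.ofReal Z) • (volume : Measure ℝ)) s := Measure.le_iff'.1 hle s
      _ = ∫⁻ _ in s, ENNReal.ofReal Z := by
          rw [Measure.smul_apply, smul_eq_mul, setLIntegral_const]
  have hneg : ∀ᵐ t ∂(volume : Measure ℝ), t < 0 → ρ' t = 0 := by
    have h0 : ν'.fst (Iio 0) = 0 := by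
      rw [hfst', withDensity_apply _ measurableSet_Iio, setLIntegral_measure_zero _ _ hIio]
    have h1 : ∫⁻ t in Iio (0:ℝ), ρ' t ∂(volume : Measure ℝ) = 0 := by
      rw [← withDensity_apply _ measurableSet_Iio, hwd]; exact h0
    have h2 := (setLIntegral_eq_zero_iff measurableSet_Iio hρ'm).1 h1
    filter_upwards [h2] with t ht htneg
    exact ht htneg
  have hκS : ∀ᵐ t ∂(volume : Measure ℝ), ρ' t ≠ 0 → ν'.condKernel t Sᶜ = 0 := by
    have h0 : ν' ((univ : Set ℝ) ×ˢ Sᶜ) = 0 := by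
      refine measure_mono_null ?_ ((withDensity_absolutelyContinuous ν _) hν0)
      intro q hq
      simp only [mem_prod, mem_univ, true_and, mem_compl_iff] at hq ⊢
      intro hmem
      exact hq hmem.2
    have h1 : ∫⁻ t, ν'.condKernel t Sᶜ ∂ν'.fst = 0 := by
      rw [← h0, ← Measure.lintegral_condKernel_mem (MeasurableSet.univ.prod hS.compl)]
      simp only [mem_prod, mem_univ, true_and, mem_compl_iff]
      rfl
    have h2 : ∀ᵐ t ∂ν'.fst, ν'.condKernel t Sᶜ = 0 :=
      (lintegral_eq_zero_iff (Kernel.measurable_coe _ hS.compl)).1 h1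
    rw [← hwd] at h2
    exact (ae_withDensity_iff hρ'm).1 h2
  -- the family of measures
  refine ⟨fun t => (min (ρ' t * eP t) (ENNReal.ofReal Z)) • ((ν'.condKernel t).restrict S),
    fun t => ⟨?_, ?_⟩, ?_, ?_⟩
  · rw [Measure.smul_apply, smul_eq_mul, Measure.restrict_apply_univ]
    calc min (ρ' t * eP t) (ENNReal.ofReal Z) * ν'.condKernel t S
        ≤ ENNReal.ofReal Z * 1 := mul_le_mul' (min_le_right _ _) prob_le_one
      _ = ENNReal.ofReal Z := mul_one _
  · rw [Measure.smul_apply, Measure.restrict_apply hS.compl]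
    simp [hSdef]
  · rintro J hJm ⟨M, hM⟩
    have hfun : (fun t => ∫ p, J p
          ∂((min (ρ' t * eP t) (ENNReal.ofReal Z)) • ((ν'.condKernel t).restrict S)))
        = fun t => (min (ρ' t * eP t) (ENNReal.ofReal Z)).toReal *
          ((∫⁻ p, ENNReal.ofReal (J p) ∂((ν'.condKernel.restrict hS) t)).toReal
            - (∫⁻ p, ENNReal.ofReal (-J p) ∂((ν'.condKernel.restrict hS) t)).toReal) := by
      funext t
      rw [integral_smul_measure, Kernel.restrict_apply, smul_eq_mul]
      congr 1
      haveI : IsFiniteMeasure ((ν'.condKernel t).restrict S) := inferInstance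
      exact integral_eq_lintegral_pos_part_sub_lintegral_neg_part
        (Integrable.mono' (integrable_const M) hJm.aestronglyMeasurable
          (ae_of_all _ fun p => by simpa [Real.norm_eq_abs] using hM p))
    rw [hfun]
    refine Measurable.mul (((hρ'm.mul heP).min measurable_const).ennreal_toReal) ?_
    refine Measurable.sub ?_ ?_
    · exact (Measurable.lintegral_kernel_prod_right'
        (f := fun q : ℝ × (X × ℝ) => ENNReal.ofReal (J q.2))
        (ENNReal.measurable_ofReal.comp (hJm.comp measurable_snd))).ennreal_toReal
    · exact (Measurable.lintegral_kernel_prod_right'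
        (f := fun q : ℝ × (X × ℝ) => ENNReal.ofReal (-J q.2))
        (ENNReal.measurable_ofReal.comp ((hJm.comp measurable_snd).neg))).ennreal_toReal
  · rintro K hKm ⟨M, hM⟩ ⟨T, hT0, hT⟩
    have hM0 : 0 ≤ M := le_trans (abs_nonneg _) (hM (Classical.arbitrary _))
    set ePn : ℝ → ℝ≥0 := fun t => Real.toNNReal (Real.exp t) with hePn
    have hePnm : Measurable ePn := measurable_real_toNNReal.comp Real.continuous_exp.measurable
    have hνν' : ν = ν'.withDensity (fun q => ((ePn q.1 : ℝ≥0) : ℝ≥0∞)) := by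
      have hcoe : (fun q : ℝ × (X × ℝ) => ((ePn q.1 : ℝ≥0) : ℝ≥0∞)) = fun q => eP q.1 := by
        funext q; rw [hePdef]; rfl
      rw [hcoe, hν'def,
        ← withDensity_mul ν (f := fun q : ℝ × (X × ℝ) => eN q.1)
          (g := fun q : ℝ × (X × ℝ) => eP q.1)
          (heN.comp measurable_fst) (heP.comp measurable_fst)]
      have h : ((fun q : ℝ × (X × ℝ) => eN q.1) * fun q : ℝ × (X × ℝ) => eP q.1)
          = fun _ => (1:ℝ≥0∞) := funext fun q => heNP q.1
      rw [h]
      exact (withDensity_one (μ := ν)).symm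
    have hKν' : Integrable (fun q : ℝ × (X × ℝ) => Real.exp q.1 * K q) ν' := by
      refine Integrable.mono' (integrable_const (Real.exp T * M))
        ((Real.continuous_exp.measurable.comp measurable_fst).mul hKm).aestronglyMeasurable
        (ae_of_all _ fun q => ?_)
      rw [Real.norm_eq_abs, abs_mul, abs_of_pos (Real.exp_pos _)]
      by_cases hq : q.1 ∈ Icc (-T) T
      · exact mul_le_mul (Real.exp_le_exp.2 hq.2) (hM q) (abs_nonneg _) (Real.exp_pos _).le
      · rw [hT q hq, abs_zero, mul_zero]; positivity
    calc ∫ q, K q ∂ν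
        = ∫ q : ℝ × (X × ℝ), Real.exp q.1 * K q ∂ν' := by
          rw [hνν', integral_withDensity_eq_integral_smul
            (f := fun q : ℝ × (X × ℝ) => ePn q.1) (hePnm.comp measurable_fst)]
          refine integral_congr_ae (ae_of_all _ fun q => ?_)
          show ePn q.1 • K q = Real.exp q.1 * K q
          rw [NNReal.smul_def, smul_eq_mul, hePn]
          simp [Real.coe_toNNReal _ (Real.exp_pos _).le]
      _ = ∫ t, ∫ p, Real.exp t * K (t, p) ∂(ν'.condKernel t) ∂ν'.fst :=
          (Measure.integral_condKernel hKν').symm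
      _ = ∫ t, (ρ' t).toReal • ∫ p, Real.exp t * K (t, p) ∂(ν'.condKernel t)
            ∂(volume : Measure ℝ) :=
          (integral_rnDeriv_smul (μ := ν'.fst) (ν := (volume : Measure ℝ)) hac'
            (f := fun t => ∫ p, Real.exp t * K (t, p) ∂(ν'.condKernel t))).symm
      _ = ∫ t in Ici (0:ℝ), ∫ p, K (t, p)
            ∂((min (ρ' t * eP t) (ENNReal.ofReal Z)) • ((ν'.condKernel t).restrict S)) := by
          rw [← integral_indicator measurableSet_Ici]
          refine integral_congr_ae ?_
          filter_upwards [hbound, hneg, hκS] with t h1 h2 h3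
          by_cases h0 : ρ' t = 0
          · have hg0 : min (ρ' t * eP t) (ENNReal.ofReal Z) = 0 := by
              rw [h0, zero_mul]; exact min_eq_left zero_le
            rw [h0]
            simp only [ENNReal.toReal_zero, zero_smul]
            rw [indicator_apply]
            split
            · rw [hg0, zero_smul, integral_zero_measure]
            · rfl
          · have ht0 : (0:ℝ) ≤ t := not_lt.1 fun hlt => h0 (h2 hlt)
            simp only [indicator_apply]
            rw [if_pos (mem_Ici.mpr ht0)]
            have hres : (ν'.condKernel t).restrict S = ν'.condKernel t :=
              Measure.restrict_eq_self_of_ae_mem (by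
                rw [ae_iff]
                exact h3 h0)
            rw [hres, integral_smul_measure, min_eq_left h1, ENNReal.toReal_mul]
            have hePt : (eP t).toReal = Real.exp t := ENNReal.toReal_ofReal (Real.exp_pos t).le
            rw [hePt, integral_const_mul]
            simp only [smul_eq_mul]
            ring


end Aux



open MeasureTheory Set

theorem stmt13 (d : ℕ) (hd : 1 ≤ d) (Z : ℝ) (hZ : 0 < Z)
    (μ : Measure (EuclideanSpace ℝ (Fin d) × ℝ × ℝ))
    (hsupp : μ ((univ ×ˢ (Ici (0 : ℝ) ×ˢ Ici (0 : ℝ)))ᶜ) = 0)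
    (hbd : ∀ t₁ t₂ : ℝ, 0 ≤ t₁ → t₁ ≤ t₂ →
      μ (univ ×ˢ ((univ : Set ℝ) ×ˢ Icc t₁ t₂)) ≤ ENNReal.ofReal ((t₂ - t₁) * Z)) :
    ∃ g : ℝ → Measure (EuclideanSpace ℝ (Fin d) × ℝ),
      (∀ t : ℝ, 0 ≤ t →
        g t univ ≤ ENNReal.ofReal Z ∧ g t ((univ ×ˢ Ici (0 : ℝ))ᶜ) = 0) ∧
      (∀ J : EuclideanSpace ℝ (Fin d) × ℝ → ℝ, Continuous J → (∃ M, ∀ p, |J p| ≤ M) →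
        Measurable fun t => ∫ p, J p ∂(g t)) ∧
      (∀ J : EuclideanSpace ℝ (Fin d) × ℝ × ℝ → ℝ,
        Continuous J → (∃ M, ∀ p, |J p| ≤ M) → HasCompactSupport J →
        (∫ p, J p ∂μ) = ∫ t in Ici (0 : ℝ), (∫ p, J (p.1, p.2, t) ∂(g t))) := by
  classical
  set X := EuclideanSpace ℝ (Fin d) with hX
  set φ : X × ℝ × ℝ → ℝ × (X × ℝ) := fun q => (q.2.2, (q.1, q.2.1)) with hφdef
  have hφm : Measurable φ :=
    (measurable_snd.comp measurable_snd).prodMk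
      (measurable_fst.prodMk (measurable_fst.comp measurable_snd))
  set ν : Measure (ℝ × (X × ℝ)) := μ.map φ with hνdef
  have hpre : ∀ s : Set ℝ, φ ⁻¹' (Prod.fst ⁻¹' s) = univ ×ˢ ((univ : Set ℝ) ×ˢ s) := by
    intro s; ext q; simp [hφdef]
  have hν0 : ν ((Ici (0:ℝ) ×ˢ ((univ : Set X) ×ˢ Ici (0:ℝ)))ᶜ) = 0 := by
    rw [hνdef, Measure.map_apply hφm
      (((measurableSet_Ici).prod (MeasurableSet.univ.prod measurableSet_Ici)).compl)]
    rw [show φ ⁻¹' ((Ici (0:ℝ) ×ˢ ((univ : Set X) ×ˢ Ici (0:ℝ)))ᶜ)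
        = ((univ : Set X) ×ˢ (Ici (0:ℝ) ×ˢ Ici (0:ℝ)))ᶜ from by
      ext q
      simp only [hφdef, mem_preimage, mem_compl_iff, mem_prod, mem_univ, true_and, mem_Ici]
      tauto]
    exact hsupp
  have hbd' : ∀ t₁ t₂ : ℝ, 0 ≤ t₁ → t₁ ≤ t₂ →
      ν.fst (Icc t₁ t₂) ≤ ENNReal.ofReal ((t₂ - t₁) * Z) := by
    intro t₁ t₂ h0 h12
    rw [Measure.fst_apply measurableSet_Icc, hνdef,
      Measure.map_apply hφm (measurable_fst measurableSet_Icc), hpre]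
    exact hbd t₁ t₂ h0 h12
  obtain ⟨g, hg1, hg2, hg3⟩ := aux_main Z hZ ν hν0 hbd'
  refine ⟨g, fun t _ => hg1 t, fun J hJc hJb => hg2 J hJc.measurable hJb, ?_⟩
  rintro J hJc ⟨M, hM⟩ hJs
  set K : ℝ × (X × ℝ) → ℝ := fun q => J (q.2.1, q.2.2, q.1) with hKdef
  have hKc : Continuous K := by
    apply hJc.comp
    exact ((continuous_fst.comp continuous_snd).prodMk
      ((continuous_snd.comp continuous_snd).prodMk continuous_fst))
  obtain ⟨r, hr⟩ :=
    ((hJs.image (continuous_snd.comp continuous_snd)).isBounded).subset_ball 0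
  have hKT : ∃ T : ℝ, 0 ≤ T ∧ ∀ q : ℝ × (X × ℝ), q.1 ∉ Icc (-T) T → K q = 0 := by
    refine ⟨max r 0, le_max_right _ _, fun q hq => ?_⟩
    by_contra h0
    have hmem : (q.2.1, q.2.2, q.1) ∈ tsupport J := subset_tsupport J h0
    have : q.1 ∈ Metric.ball (0:ℝ) r := hr ⟨(q.2.1, q.2.2, q.1), hmem, rfl⟩
    rw [Metric.mem_ball, Real.dist_eq, sub_zero] at this
    have habs := abs_lt.1 this
    exact hq ⟨by nlinarith [le_max_left r 0], by nlinarith [le_max_left r 0]⟩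
  have h1 : ∫ p, J p ∂μ = ∫ q, K q ∂ν := by
    rw [hνdef, integral_map hφm.aemeasurable hKc.aestronglyMeasurable]
  rw [h1]
  exact hg3 K hKc.measurable ⟨M, fun q => hM _⟩ hKT
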